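/- Markovian integrands are controlled paths (claim of Example 4.2): Let T > 0, α ∈ (0,1], k := ⌊1/α⌋. Let X : [0,T] → ℝ satisfy |X_t − X_s| ≤ C_X·(t−s)^α and let G^2, …, G^k : [0,T] → ℝ satisfy the strengthened regularity |G^m_t − G^m_s| ≤ C_G·(t−s)^{kα} for all 0 ≤ s ≤ t ≤ T and m = 2, …, k. Define 𝕏^n_{s,t} := P_n^{(k)}(X_t − X_s, G^2_t − G^2_s, …, G^k_t − G^k_s) for n = 0, …, k. Let f : [0,T] × ℝ → ℝ be such that the partial derivatives ∂_t^a ∂_x^i f exist and are continuous on [0,T] × ℝ for all a ∈ {0,1} and 0 ≤ i ≤ k, and set Y^{(i)}_t := ∂_x^{i−1} f(t, X_t) for i = 1, …, k. Then there is a constant C such that |Y^{(i)}_t − Y^{(i)}_s − ∑_{j=i+1}^{k} Y^{(j)}_s · 𝕏^{j−i}_{s,t}| ≤ C·(t−s)^{(k+1−i)α} for all 0 ≤ s ≤ t ≤ T and i = 1, …, k; that is, (Y^{(1)}, …, Y^{(k)}) is a controlled path with respect to (𝕏^n)_{n ≤ k}. -/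

import Mathlib

open Finset

/-- The `n`-th complete Bell polynomial of degree `k`. -/
noncomputable def bellP (k n : ℕ) (a : Fin k → ℝ) : ℝ :=
  ∑ p ∈ (Fintype.piFinset fun _ : Fin k => Finset.range (n + 1)).filter
      (fun p => ∑ m : Fin k, ((m : ℕ) + 1) * p m = n),
    ∏ m : Fin k, a m ^ p m / (Nat.factorial (p m) : ℝ)

lemma crude (Δ T e e' Em : ℝ) (h0 : 0 < Δ) (hΔT : Δ ≤ T)
    (hee : e' ≤ e) (hEm : e - e' ≤ Em) :
    Δ ^ e ≤ (max 1 T) ^ Em * Δ ^ e' := by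
  have h1T : (1:ℝ) ≤ max 1 T := le_max_left _ _
  have h2 : Δ ^ e = Δ ^ (e - e') * Δ ^ e' := by
    rw [← Real.rpow_add h0]; ring_nf
  rw [h2]
  have h3 : Δ ^ (e - e') ≤ (max 1 T) ^ (e - e') :=
    Real.rpow_le_rpow h0.le (le_trans hΔT (le_max_right _ _)) (by linarith)
  have h4 : (max 1 T) ^ (e - e') ≤ (max 1 T) ^ Em :=
    Real.rpow_le_rpow_of_exponent_le h1T hEm
  exact mul_le_mul_of_nonneg_right (h3.trans h4) (Real.rpow_nonneg h0.le _)

lemma taylor_aux (n : ℕ) (hn : 1 ≤ n) (g : ℕ → ℝ → ℝ) (x₀ x₁ : ℝ) (M : ℝ)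
    (hder : ∀ m < n, ∀ x : ℝ, HasDerivAt (g m) (g (m+1) x) x)
    (hM : ∀ y ∈ Set.uIcc x₀ x₁, |g n y| ≤ M) :
    |g 0 x₁ - ∑ m ∈ Finset.range n, g m x₀ * (x₁ - x₀) ^ m / (Nat.factorial m : ℝ)|
      ≤ M * |x₁ - x₀| ^ n := by
  set h : ℝ → ℝ := fun u => ∑ m ∈ Finset.range n, g m u * (x₁ - u) ^ m / (Nat.factorial m : ℝ) with hh
  set c : ℕ → ℝ → ℝ := fun m u => if m = 0 then 0 else
    g m u * (x₁ - u) ^ (m - 1) / (Nat.factorial (m-1) : ℝ) with hc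
  have hderh : ∀ u : ℝ, HasDerivAt h (c n u) u := by
    intro u
    have hterm : ∀ m < n, HasDerivAt (fun u => g m u * (x₁ - u) ^ m / (Nat.factorial m : ℝ))
        (c (m+1) u - c m u) u := by
      intro m hm
      have hpow : HasDerivAt (fun u : ℝ => (x₁ - u) ^ m) (-(m * (x₁ - u) ^ (m - 1))) u := by
        have h1 : HasDerivAt (fun u : ℝ => x₁ - u) (-1) u := by
          simpa using (hasDerivAt_id u).const_sub x₁
        have := (hasDerivAt_pow m (x₁ - u)).comp u h1
        exact this.congr_deriv (by ring)
      have hmul := ((hder m (by omega) u).mul hpow).div_const (Nat.factorial m : ℝ)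
      refine hmul.congr_deriv ?_
      cases m with
      | zero => simp [hc]
      | succ p =>
        simp only [hc, Nat.succ_ne_zero, if_false, Nat.add_sub_cancel]
        have hne : (Nat.factorial (p+1) : ℝ) ≠ 0 := Nat.cast_ne_zero.mpr (Nat.factorial_ne_zero _)
        have hne' : (Nat.factorial p : ℝ) ≠ 0 := Nat.cast_ne_zero.mpr (Nat.factorial_ne_zero _)
        rw [Nat.factorial_succ]
        push_cast
        field_simp
        ring
    have := HasDerivAt.fun_sum (fun m hm => hterm m (Finset.mem_range.mp hm))
    have hsum : ∑ m ∈ Finset.range n, (c (m+1) u - c m u) = c n u - c 0 u :=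
      Finset.sum_range_sub (fun m => c m u) n
    rw [hsum] at this
    simpa [hc] using this
  have hx₁ : h x₁ = g 0 x₁ := by
    show (∑ m ∈ Finset.range n, g m x₁ * (x₁ - x₁) ^ m / (Nat.factorial m : ℝ)) = g 0 x₁
    rw [Finset.sum_eq_single 0]
    · simp
    · intro m hm hm0; simp [sub_self, zero_pow hm0]
    · intro h0; simp at h0; omega
  have hx₀ : h x₀ = ∑ m ∈ Finset.range n, g m x₀ * (x₁ - x₀) ^ m / (Nat.factorial m : ℝ) := rfl
  have hM0 : 0 ≤ M := le_trans (abs_nonneg _) (hM x₀ Set.left_mem_uIcc)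
  have key : ‖h x₁ - h x₀‖ ≤ (M * |x₁ - x₀| ^ (n-1)) * ‖x₁ - x₀‖ := by
    apply Convex.norm_image_sub_le_of_norm_hasDerivWithin_le
      (f' := fun u => c n u) (s := Set.uIcc x₀ x₁)
    · intro x _; exact (hderh x).hasDerivWithinAt
    · intro x hx
      have hn0 : n ≠ 0 := by omega
      simp only [hc, hn0, if_false, Real.norm_eq_abs]
      rw [abs_div, abs_mul]
      have h1 : |(x₁ - x) ^ (n-1)| ≤ |x₁ - x₀| ^ (n-1) := by
        rw [abs_pow]
        apply pow_le_pow_left₀ (abs_nonneg _)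
        rw [Set.mem_uIcc] at hx
        rcases hx with ⟨ha, hb⟩ | ⟨ha, hb⟩ <;>
          · rw [abs_le]; constructor <;>
            nlinarith [abs_nonneg (x₁ - x₀), le_abs_self (x₁ - x₀), neg_abs_le (x₁ - x₀)]
      have h2 : (1:ℝ) ≤ |(Nat.factorial (n-1) : ℝ)| := by
        rw [Nat.abs_cast]
        exact_mod_cast Nat.one_le_iff_ne_zero.mpr (Nat.factorial_ne_zero _)
      calc |g n x| * |(x₁ - x) ^ (n-1)| / |(Nat.factorial (n-1) : ℝ)|
          ≤ |g n x| * |(x₁ - x) ^ (n-1)| :=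
            div_le_self (mul_nonneg (abs_nonneg _) (abs_nonneg _)) h2
        _ ≤ M * |x₁ - x₀| ^ (n-1) :=
            mul_le_mul (hM x hx) h1 (abs_nonneg _) hM0
    · exact convex_uIcc x₀ x₁
    · exact Set.left_mem_uIcc
    · exact Set.right_mem_uIcc
  rw [hx₁, hx₀, Real.norm_eq_abs, Real.norm_eq_abs] at key
  have hnn : n - 1 + 1 = n := by omega
  calc |g 0 x₁ - ∑ m ∈ Finset.range n, g m x₀ * (x₁ - x₀) ^ m / (Nat.factorial m : ℝ)|
      ≤ M * |x₁ - x₀| ^ (n-1) * |x₁ - x₀| := key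
    _ = M * |x₁ - x₀| ^ n := by rw [mul_assoc, ← pow_succ, hnn]

lemma bell_aux (k n : ℕ) (hk1 : 0 < k) (hn1 : 1 ≤ n) (hnk : n ≤ k) (a : Fin k → ℝ)
    (c1 c2 d1 d2 D : ℝ) (hc1 : 0 ≤ c1) (hc2 : 0 ≤ c2) (hd1 : 0 ≤ d1) (hd2 : 0 ≤ d2)
    (hD : 0 ≤ D)
    (ha0 : |a ⟨0, hk1⟩| ≤ c1 * d1)
    (ham : ∀ m : Fin k, (m : ℕ) ≠ 0 → |a m| ≤ c2 * d2)
    (hDq : ∀ p0 q : ℕ, p0 ≤ k → 1 ≤ q → q ≤ k → d1 ^ p0 * d2 ^ q ≤ D) :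
    |bellP k n a - a ⟨0, hk1⟩ ^ n / (Nat.factorial n : ℝ)|
      ≤ ((k : ℝ) + 1) ^ k * ((max 1 c1) ^ k * (max 1 c2) ^ k * D) := by
  set z : Fin k := ⟨0, hk1⟩ with hz
  set S := (Fintype.piFinset fun _ : Fin k => Finset.range (n + 1)).filter
      (fun p => ∑ m : Fin k, ((m : ℕ) + 1) * p m = n) with hS
  set pstar : Fin k → ℕ := fun m => if m = z then n else 0 with hpstar
  have hzval : (z : ℕ) = 0 := rfl
  have hpS : pstar ∈ S := by
    rw [hS, Finset.mem_filter]
    constructor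
    · rw [Fintype.mem_piFinset]
      intro m
      rw [Finset.mem_range]
      by_cases hm : m = z <;> simp [hpstar, hm] <;> omega
    · rw [Finset.sum_eq_single z]
      · simp [hpstar, hzval]
      · intro m _ hm; simp [hpstar, hm]
      · intro h; exact absurd (Finset.mem_univ z) h
  have hterm : (∏ m : Fin k, a m ^ pstar m / (Nat.factorial (pstar m) : ℝ))
      = a z ^ n / (Nat.factorial n : ℝ) := by
    rw [Finset.prod_eq_single z]
    · simp [hpstar]
    · intro m _ hm; simp [hpstar, hm]
    · intro h; exact absurd (Finset.mem_univ z) h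
  have hsplit : bellP k n a - a z ^ n / (Nat.factorial n : ℝ)
      = ∑ p ∈ S.erase pstar, ∏ m : Fin k, a m ^ p m / (Nat.factorial (p m) : ℝ) := by
    rw [bellP, ← hS, ← Finset.add_sum_erase S _ hpS, hterm]; ring
  rw [hsplit]
  set B : ℝ := (max 1 c1) ^ k * (max 1 c2) ^ k * D with hB
  have hBnn : 0 ≤ B := by
    apply mul_nonneg (mul_nonneg (pow_nonneg ?_ _) (pow_nonneg ?_ _)) hD <;>
      exact le_trans zero_le_one (le_max_left _ _)
  have hbound : ∀ p ∈ S.erase pstar,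
      |∏ m : Fin k, a m ^ p m / (Nat.factorial (p m) : ℝ)| ≤ B := by
    intro p hp
    obtain ⟨hne, hpS'⟩ := Finset.mem_erase.mp hp
    rw [hS, Finset.mem_filter, Fintype.mem_piFinset] at hpS'
    obtain ⟨hmem, hwt⟩ := hpS'
    have hple : ∀ m : Fin k, p m ≤ n := fun m => by
      have := hmem m; rw [Finset.mem_range] at this; omega
    set q : ℕ := ∑ m ∈ Finset.univ.erase z, p m with hq
    have hqn : q ≤ n := by
      calc q ≤ ∑ m ∈ Finset.univ.erase z, ((m : ℕ) + 1) * p m :=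
            Finset.sum_le_sum (fun m _ => Nat.le_mul_of_pos_left _ (by omega))
        _ ≤ ∑ m : Fin k, ((m : ℕ) + 1) * p m :=
            Finset.sum_le_sum_of_subset (Finset.erase_subset _ _)
        _ = n := hwt
    have hq1 : 1 ≤ q := by
      by_contra hq0
      push_neg at hq0
      interval_cases q
      have hall : ∀ m ∈ Finset.univ.erase z, p m = 0 := by
        intro m hm
        have := Finset.sum_eq_zero_iff.mp hq.symm
        exact this m hm
      apply hne
      funext m
      by_cases hm : m = z
      · subst hm
        have : ∑ m : Fin k, ((m : ℕ) + 1) * p m = p z := by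
          rw [Finset.sum_eq_single z]
          · simp [hzval]
          · intro m hmu hm2; rw [hall m (Finset.mem_erase.mpr ⟨hm2, hmu⟩)]; ring
          · intro h; exact absurd (Finset.mem_univ z) h
        simp [hpstar, this ▸ hwt]
      · rw [hall m (Finset.mem_erase.mpr ⟨hm, Finset.mem_univ m⟩)]
        simp [hpstar, hm]
    have step1 : |∏ m : Fin k, a m ^ p m / (Nat.factorial (p m) : ℝ)|
        ≤ ∏ m : Fin k, |a m| ^ p m := by
      rw [Finset.abs_prod]
      apply Finset.prod_le_prod (fun m _ => abs_nonneg _)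
      intro m _
      rw [abs_div, abs_pow, Nat.abs_cast]
      exact div_le_self (pow_nonneg (abs_nonneg _) _)
        (by exact_mod_cast Nat.one_le_iff_ne_zero.mpr (Nat.factorial_ne_zero _))
    have step2 : ∏ m : Fin k, |a m| ^ p m ≤ (c1 * d1) ^ p z * (c2 * d2) ^ q := by
      rw [← Finset.mul_prod_erase Finset.univ _ (Finset.mem_univ z)]
      have h1 : |a z| ^ p z ≤ (c1 * d1) ^ p z := pow_le_pow_left₀ (abs_nonneg _) ha0 _
      have h2 : ∏ m ∈ Finset.univ.erase z, |a m| ^ p m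
          ≤ ∏ m ∈ Finset.univ.erase z, (c2 * d2) ^ p m := by
        apply Finset.prod_le_prod (fun m _ => pow_nonneg (abs_nonneg _) _)
        intro m hm
        have hm0 : (m : ℕ) ≠ 0 := by
          obtain ⟨hm1, _⟩ := Finset.mem_erase.mp hm
          intro hcon
          exact hm1 (Fin.ext (by rw [hcon, hzval]))
        exact pow_le_pow_left₀ (abs_nonneg _) (ham m hm0) _
      calc |a z| ^ p z * ∏ m ∈ Finset.univ.erase z, |a m| ^ p m
          ≤ (c1*d1) ^ p z * ∏ m ∈ Finset.univ.erase z, (c2*d2) ^ p m := by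
            apply mul_le_mul h1 h2 (Finset.prod_nonneg (fun m _ => pow_nonneg (abs_nonneg _) _))
              (pow_nonneg (mul_nonneg hc1 hd1) _)
        _ = (c1*d1) ^ p z * (c2*d2) ^ q := by rw [Finset.prod_pow_eq_pow_sum]
    have step3 : (c1 * d1) ^ p z * (c2 * d2) ^ q ≤ B := by
      rw [mul_pow, mul_pow]
      have h1 : c1 ^ p z ≤ (max 1 c1) ^ k :=
        le_trans (pow_le_pow_left₀ hc1 (le_max_right _ _) _)
          (pow_le_pow_right₀ (le_max_left _ _) (le_trans (hple z) hnk))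
      have h2 : c2 ^ q ≤ (max 1 c2) ^ k :=
        le_trans (pow_le_pow_left₀ hc2 (le_max_right _ _) _)
          (pow_le_pow_right₀ (le_max_left _ _) (le_trans hqn hnk))
      have h3 : d1 ^ p z * d2 ^ q ≤ D := hDq _ _ (le_trans (hple z) hnk) hq1 (le_trans hqn hnk)
      calc c1 ^ p z * d1 ^ p z * (c2 ^ q * d2 ^ q)
          = (c1 ^ p z * c2 ^ q) * (d1 ^ p z * d2 ^ q) := by ring
        _ ≤ ((max 1 c1) ^ k * (max 1 c2) ^ k) * D := by
            apply mul_le_mul _ h3 (mul_nonneg (pow_nonneg hd1 _) (pow_nonneg hd2 _))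
              (mul_nonneg (pow_nonneg ?_ _) (pow_nonneg ?_ _))
            · exact mul_le_mul h1 h2 (pow_nonneg hc2 _)
                (pow_nonneg (le_trans zero_le_one (le_max_left _ _)) _)
            · exact le_trans zero_le_one (le_max_left _ _)
            · exact le_trans zero_le_one (le_max_left _ _)
        _ = B := by rw [hB]
    exact le_trans step1 (le_trans step2 step3)
  have hcard : ((S.erase pstar).card : ℝ) ≤ ((k : ℝ) + 1) ^ k := by
    have h1 : (S.erase pstar).card ≤ S.card := Finset.card_erase_le
    have h2 : S.card ≤ (Fintype.piFinset fun _ : Fin k => Finset.range (n + 1)).card :=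
      Finset.card_filter_le _ _
    have h3 : (Fintype.piFinset fun _ : Fin k => Finset.range (n + 1)).card = (n+1) ^ k := by
      rw [Fintype.card_piFinset]
      simp [Finset.prod_const]
    have h4 : (n+1) ^ k ≤ (k+1) ^ k := Nat.pow_le_pow_left (by omega) _
    have : (S.erase pstar).card ≤ (k+1)^k := by omega
    calc ((S.erase pstar).card : ℝ) ≤ (((k+1)^k : ℕ) : ℝ) := by exact_mod_cast this
      _ = ((k:ℝ)+1)^k := by push_cast; ring
  calc |∑ p ∈ S.erase pstar, ∏ m : Fin k, a m ^ p m / (Nat.factorial (p m) : ℝ)|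
      ≤ ∑ p ∈ S.erase pstar, |∏ m : Fin k, a m ^ p m / (Nat.factorial (p m) : ℝ)| :=
        Finset.abs_sum_le_sum_abs _ _
    _ ≤ ∑ _p ∈ S.erase pstar, B := Finset.sum_le_sum hbound
    _ = ((S.erase pstar).card : ℝ) * B := by rw [Finset.sum_const, nsmul_eq_mul]
    _ ≤ ((k : ℝ) + 1) ^ k * B := mul_le_mul_of_nonneg_right hcard hBnn

lemma bell_zero (k n : ℕ) (hn : 1 ≤ n) (a : Fin k → ℝ) (ha : ∀ m, a m = 0) :
    bellP k n a = 0 := by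
  rw [bellP]
  apply Finset.sum_eq_zero
  intro p hp
  rw [Finset.mem_filter] at hp
  obtain ⟨_, hwt⟩ := hp
  have hex : ∃ m : Fin k, p m ≠ 0 := by
    by_contra hcon
    push_neg at hcon
    rw [Finset.sum_eq_zero (fun m _ => by rw [hcon m, Nat.mul_zero])] at hwt
    omega
  obtain ⟨m, hm⟩ := hex
  apply Finset.prod_eq_zero (Finset.mem_univ m)
  rw [ha m, zero_pow hm, zero_div]


set_option maxHeartbeats 1600000 in
/-- Markovian integrands are controlled paths.  Here `fd i t x`
represents `∂_x^i f(t,x)` and `ft i t x` represents `∂_t ∂_x^i f(t,x)`; the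
hypotheses say that these partial derivatives exist and are continuous on
`[0,T] × ℝ` for `0 ≤ i ≤ k`.  With `Y^{(i)}_t := ∂_x^{i-1} f(t, X_t)`, the tuple
`(Y^{(1)},…,Y^{(k)})` is a controlled path with respect to the rough path `𝕏`
built from `X` and the renormalisation terms `G^2,…,G^k` (of the strengthened
`kα`-Hölder regularity) via complete Bell polynomials. -/
theorem markovian_integrand_controlled
    (T α : ℝ) (hT : 0 < T) (hα : 0 < α) (hα1 : α ≤ 1)
    (k : ℕ) (hk : k = ⌊1 / α⌋₊)
    (X : ℝ → ℝ) (G : ℕ → ℝ → ℝ) (CX CG : ℝ)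
    (hX : ∀ s t : ℝ, 0 ≤ s → s ≤ t → t ≤ T → |X t - X s| ≤ CX * (t - s) ^ α)
    (hG : ∀ m, 2 ≤ m → m ≤ k → ∀ s t : ℝ, 0 ≤ s → s ≤ t → t ≤ T →
      |G m t - G m s| ≤ CG * (t - s) ^ ((k : ℝ) * α))
    (𝕏 : ℕ → ℝ → ℝ → ℝ)
    (h𝕏 : ∀ n, ∀ s t : ℝ, 𝕏 n s t = bellP k n (fun i : Fin k =>
      if (i : ℕ) = 0 then X t - X s else G ((i : ℕ) + 1) t - G ((i : ℕ) + 1) s))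
    (f : ℝ → ℝ → ℝ) (fd ft : ℕ → ℝ → ℝ → ℝ)
    (hfd0 : fd 0 = f)
    -- the spatial derivatives ∂_x^i f, 0 ≤ i ≤ k, exist ...
    (hx : ∀ i, i < k → ∀ t ∈ Set.Icc (0 : ℝ) T, ∀ x : ℝ,
      HasDerivAt (fun y => fd i t y) (fd (i + 1) t x) x)
    -- ... the time derivatives ∂_t ∂_x^i f, 0 ≤ i ≤ k, exist ...
    (ht : ∀ i, i ≤ k → ∀ t ∈ Set.Icc (0 : ℝ) T, ∀ x : ℝ,
      HasDerivWithinAt (fun u => fd i u x) (ft i t x) (Set.Icc 0 T) t)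
    -- ... and all these partial derivatives are continuous on [0,T] × ℝ.
    (hcx : ∀ i, i ≤ k → ContinuousOn (fun p : ℝ × ℝ => fd i p.1 p.2)
      (Set.Icc (0 : ℝ) T ×ˢ Set.univ))
    (hct : ∀ i, i ≤ k → ContinuousOn (fun p : ℝ × ℝ => ft i p.1 p.2)
      (Set.Icc (0 : ℝ) T ×ˢ Set.univ))
    (Y : ℕ → ℝ → ℝ) (hYdef : ∀ i, 1 ≤ i → i ≤ k → ∀ t : ℝ, Y i t = fd (i - 1) t (X t)) :
    ∃ C : ℝ, ∀ i, 1 ≤ i → i ≤ k → ∀ s t : ℝ, 0 ≤ s → s ≤ t → t ≤ T →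
      |Y i t - Y i s - ∑ j ∈ Finset.Icc (i + 1) k, Y j s * 𝕏 (j - i) s t|
        ≤ C * (t - s) ^ (((k + 1 - i : ℕ) : ℝ) * α) := by
  -- basic facts about k
  have hk1 : 0 < k := by
    rw [hk]
    exact Nat.floor_pos.mpr (by rw [le_div_iff₀ hα, one_mul]; exact hα1)
  have hkα : (k : ℝ) * α ≤ 1 := by
    have h1 : (k : ℝ) ≤ 1 / α := by
      rw [hk]; exact Nat.floor_le (by positivity)
    have := mul_le_mul_of_nonneg_right h1 hα.le
    rwa [one_div_mul_cancel hα.ne'] at this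
  -- normalized Hölder constants
  set CX' : ℝ := max CX 0 with hCX'
  set CG' : ℝ := max CG 0 with hCG'
  have hCX0 : 0 ≤ CX' := le_max_right _ _
  have hCG0 : 0 ≤ CG' := le_max_right _ _
  have hX' : ∀ s t : ℝ, 0 ≤ s → s ≤ t → t ≤ T → |X t - X s| ≤ CX' * (t - s) ^ α := by
    intro s t h1 h2 h3
    exact (hX s t h1 h2 h3).trans
      (mul_le_mul_of_nonneg_right (le_max_left _ _) (Real.rpow_nonneg (by linarith) _))
  have hG' : ∀ m, 2 ≤ m → m ≤ k → ∀ s t : ℝ, 0 ≤ s → s ≤ t → t ≤ T →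
      |G m t - G m s| ≤ CG' * (t - s) ^ ((k : ℝ) * α) := by
    intro m hm1 hm2 s t h1 h2 h3
    exact (hG m hm1 hm2 s t h1 h2 h3).trans
      (mul_le_mul_of_nonneg_right (le_max_left _ _) (Real.rpow_nonneg (by linarith) _))
  -- range of X
  set R : ℝ := |X 0| + CX' * T ^ α with hR
  have hXR : ∀ u : ℝ, 0 ≤ u → u ≤ T → |X u| ≤ R := by
    intro u h1 h2
    have h3 := hX' 0 u le_rfl h1 h2
    have h4 : (u - 0 : ℝ) ^ α ≤ T ^ α := Real.rpow_le_rpow (by linarith) (by linarith) hα.le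
    have h5 : |X u| ≤ |X u - X 0| + |X 0| := by
      calc |X u| = |(X u - X 0) + X 0| := by ring_nf
        _ ≤ |X u - X 0| + |X 0| := abs_add_le _ _
    have h6 : CX' * (u - 0) ^ α ≤ CX' * T ^ α := mul_le_mul_of_nonneg_left h4 hCX0
    rw [hR]; linarith
  -- uniform bound on fd and ft over the compact set
  obtain ⟨M, hM0, hMb⟩ : ∃ M : ℝ, 0 ≤ M ∧ ∀ i ≤ k, ∀ u x : ℝ, 0 ≤ u → u ≤ T → |x| ≤ R →
      |fd i u x| ≤ M ∧ |ft i u x| ≤ M := by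
    set Kset : Set (ℝ × ℝ) := Set.Icc 0 T ×ˢ Set.Icc (-R) R with hKset
    have hKcomp : IsCompact Kset := (isCompact_Icc).prod isCompact_Icc
    have hsub : Kset ⊆ Set.Icc (0:ℝ) T ×ˢ (Set.univ : Set ℝ) :=
      Set.prod_mono subset_rfl (Set.subset_univ _)
    set F : ℝ × ℝ → ℝ :=
      fun p => ∑ i ∈ Finset.range (k+1), (|fd i p.1 p.2| + |ft i p.1 p.2|) with hF
    have hFcont : ContinuousOn F Kset := by
      apply continuousOn_finset_sum
      intro i hi
      have hik : i ≤ k := by rw [Finset.mem_range] at hi; omega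
      exact (((hcx i hik).mono hsub).abs).add (((hct i hik).mono hsub).abs)
    obtain ⟨M0, hM0b⟩ := hKcomp.exists_bound_of_continuousOn hFcont
    refine ⟨max M0 0, le_max_right _ _, ?_⟩
    intro i hik u x hu1 hu2 hx1
    have hmem : (u, x) ∈ Kset := by
      rw [hKset, Set.mem_prod]
      exact ⟨Set.mem_Icc.mpr ⟨hu1, hu2⟩, Set.mem_Icc.mpr (abs_le.mp hx1)⟩
    have hFle := hM0b (u, x) hmem
    rw [Real.norm_eq_abs] at hFle
    have hFabs : F (u, x) ≤ max M0 0 := le_trans (le_abs_self _) (hFle.trans (le_max_left _ _))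
    have hsingle : |fd i u x| + |ft i u x| ≤ F (u, x) := by
      apply Finset.single_le_sum (f := fun i => |fd i u x| + |ft i u x|)
      · intro j _; positivity
      · rw [Finset.mem_range]; omega
    constructor <;> [linarith [abs_nonneg (ft i u x)]; linarith [abs_nonneg (fd i u x)]]
  -- constants
  set K1 : ℝ := (max 1 T) ^ (((k:ℝ)+1)^3) with hK1
  have hK1nn : 0 ≤ K1 := Real.rpow_nonneg (le_trans zero_le_one (le_max_left _ _)) _
  set B1 : ℝ := (max 1 CX') ^ k with hB1
  set B2 : ℝ := (max 1 CG') ^ k with hB2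
  have hB1nn : 0 ≤ B1 := pow_nonneg (le_trans zero_le_one (le_max_left _ _)) _
  have hB2nn : 0 ≤ B2 := pow_nonneg (le_trans zero_le_one (le_max_left _ _)) _
  set C : ℝ := M * K1 + M * B1 + (k:ℝ) * (M * (((k:ℝ)+1)^k * (B1 * (B2 * K1)))) with hC
  have hCnn : 0 ≤ C := by positivity
  refine ⟨C, ?_⟩
  intro i hi1 hik s t hs hst htT
  set n : ℕ := k + 1 - i with hn
  have hn1 : 1 ≤ n := by omega
  have hnk : n ≤ k := by omega
  rcases eq_or_lt_of_le hst with heq | hlt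
  · -- degenerate case s = t
    subst heq
    have hzero : ∀ j ∈ Finset.Icc (i+1) k, Y j s * 𝕏 (j - i) s s = 0 := by
      intro j hj
      rw [Finset.mem_Icc] at hj
      rw [h𝕏, bell_zero k (j - i) (by omega), mul_zero]
      intro m; split <;> ring
    rw [Finset.sum_eq_zero hzero]
    have he : (((k + 1 - i : ℕ) : ℝ) * α) ≠ 0 := by
      have : (0:ℝ) < ((k + 1 - i : ℕ) : ℝ) := by
        have : 1 ≤ k + 1 - i := by omega
        exact_mod_cast Nat.lt_of_lt_of_le Nat.zero_lt_one this
      positivity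
    rw [sub_self, sub_zero, abs_zero, sub_self, Real.zero_rpow he, mul_zero]
  · -- main case: s < t
    have hΔ : (0:ℝ) < t - s := by linarith
    have hΔT : t - s ≤ T := by linarith
    have ht0T : t ∈ Set.Icc (0:ℝ) T := Set.mem_Icc.mpr ⟨by linarith, htT⟩
    have hs0T : s ∈ Set.Icc (0:ℝ) T := Set.mem_Icc.mpr ⟨hs, by linarith⟩
    have hXtR : |X t| ≤ R := hXR t (by linarith) htT
    have hXsR : |X s| ≤ R := hXR s hs (by linarith)
    set e' : ℝ := ((n : ℕ) : ℝ) * α with he'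
    have hncast : ((n:ℕ):ℝ) ≤ (k:ℝ) := by exact_mod_cast hnk
    have hncast1 : (1:ℝ) ≤ ((n:ℕ):ℝ) := by exact_mod_cast hn1
    have hkcast : (0:ℝ) ≤ (k:ℝ) := Nat.cast_nonneg k
    have hcube : (1:ℝ) ≤ ((k:ℝ)+1)^3 := one_le_pow₀ (by linarith)
    have he'le1 : e' ≤ 1 := by
      rw [he']
      calc ((n:ℕ):ℝ) * α ≤ (k:ℝ) * α := mul_le_mul_of_nonneg_right hncast hα.le
        _ ≤ 1 := hkα
    have he'nn : 0 ≤ e' := by rw [he']; positivity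
    have hΔe'nn : 0 ≤ (t - s) ^ e' := Real.rpow_nonneg hΔ.le _
    -- crude instance for exponent 1
    have hcrude1 : t - s ≤ K1 * (t - s) ^ e' := by
      have h := crude (t - s) T 1 e' (((k:ℝ)+1)^3) hΔ hΔT he'le1 (by linarith [hcube, he'nn])
      rwa [Real.rpow_one] at h
    -- A1: time increment
    have hA1 : |fd (i-1) t (X t) - fd (i-1) s (X t)| ≤ M * (K1 * (t - s) ^ e') := by
      have hder : ∀ u ∈ Set.Icc s t, HasDerivWithinAt (fun u => fd (i-1) u (X t))
          (ft (i-1) u (X t)) (Set.Icc s t) u := by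
        intro u hu
        have hu' : u ∈ Set.Icc (0:ℝ) T := Set.Icc_subset_Icc hs htT hu
        exact (ht (i-1) (by omega) u hu' (X t)).mono (Set.Icc_subset_Icc hs htT)
      have hbd : ∀ u ∈ Set.Icc s t, ‖ft (i-1) u (X t)‖ ≤ M := by
        intro u hu
        rw [Set.mem_Icc] at hu
        rw [Real.norm_eq_abs]
        exact (hMb (i-1) (by omega) u (X t) (by linarith [hu.1]) (by linarith [hu.2]) hXtR).2
      have h := Convex.norm_image_sub_le_of_norm_hasDerivWithin_le hder hbd (convex_Icc s t)
        (Set.left_mem_Icc.mpr hst) (Set.right_mem_Icc.mpr hst)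
      rw [Real.norm_eq_abs, Real.norm_eq_abs, abs_of_pos hΔ] at h
      calc |fd (i-1) t (X t) - fd (i-1) s (X t)| ≤ M * (t - s) := h
        _ ≤ M * (K1 * (t - s) ^ e') := mul_le_mul_of_nonneg_left hcrude1 hM0
    -- A2: Taylor expansion in space
    have hgder : ∀ m < n, ∀ x : ℝ,
        HasDerivAt (fun x => fd (i - 1 + m) s x) (fd (i - 1 + (m+1)) s x) x := by
      intro m hm x
      have h1 := hx (i-1+m) (by omega) s hs0T x
      have h2 : i - 1 + m + 1 = i - 1 + (m+1) := by omega
      rw [← h2]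
      exact h1
    have huIccR : ∀ y ∈ Set.uIcc (X s) (X t), |y| ≤ R := by
      intro y hy
      rw [Set.mem_uIcc] at hy
      rw [abs_le] at hXsR hXtR ⊢
      rcases hy with ⟨h1,h2⟩|⟨h1,h2⟩ <;> constructor <;> linarith [hXsR.1, hXsR.2, hXtR.1, hXtR.2]
    have hgM : ∀ y ∈ Set.uIcc (X s) (X t), |(fun m x => fd (i - 1 + m) s x) n y| ≤ M := by
      intro y hy
      show |fd (i - 1 + n) s y| ≤ M
      have hik' : i - 1 + n = k := by omega
      rw [hik']
      exact (hMb k le_rfl s y hs (by linarith) (huIccR y hy)).1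
    have hA2 := taylor_aux n hn1 (fun m x => fd (i - 1 + m) s x) (X s) (X t) M hgder hgM
    have hXineq : |X t - X s| ≤ CX' * (t - s) ^ α := hX' s t hs hst htT
    have hΔαnn : (0:ℝ) ≤ (t - s) ^ α := Real.rpow_nonneg hΔ.le _
    have hpowXn : |X t - X s| ^ n ≤ B1 * (t - s) ^ e' := by
      have h1 : |X t - X s| ^ n ≤ (CX' * (t - s)^α) ^ n :=
        pow_le_pow_left₀ (abs_nonneg _) hXineq n
      have h2 : (CX' * (t - s)^α) ^ n = CX'^n * ((t - s)^α)^n := mul_pow _ _ _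
      have h3 : ((t - s)^α)^n = (t - s) ^ e' := by
        rw [← Real.rpow_natCast ((t - s)^α) n, ← Real.rpow_mul hΔ.le, he', mul_comm]
      have h4 : CX'^n ≤ B1 := by
        rw [hB1]
        exact le_trans (pow_le_pow_left₀ hCX0 (le_max_right _ _) _)
          (pow_le_pow_right₀ (le_max_left _ _) hnk)
      calc |X t - X s| ^ n ≤ CX'^n * ((t - s)^α)^n := by rw [← h2]; exact h1
        _ = CX'^n * (t - s)^e' := by rw [h3]
        _ ≤ B1 * (t - s)^e' := mul_le_mul_of_nonneg_right h4 hΔe'nn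
    have hA2' : |fd (i - 1 + 0) s (X t) - ∑ m ∈ Finset.range n,
        fd (i - 1 + m) s (X s) * (X t - X s) ^ m / (Nat.factorial m : ℝ)|
        ≤ M * (B1 * (t - s) ^ e') := by
      exact le_trans hA2 (mul_le_mul_of_nonneg_left hpowXn hM0)
    -- Bell polynomial estimates
    have hDq : ∀ p0 q : ℕ, p0 ≤ k → 1 ≤ q → q ≤ k →
        ((t-s)^α)^p0 * ((t-s)^((k:ℝ)*α))^q ≤ K1 * (t-s)^e' := by
      intro p0 q h1 h2 h3
      have hp0c : ((p0:ℕ):ℝ) ≤ (k:ℝ) := by exact_mod_cast h1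
      have hp0c0 : (0:ℝ) ≤ ((p0:ℕ):ℝ) := Nat.cast_nonneg _
      have hqc : ((q:ℕ):ℝ) ≤ (k:ℝ) := by exact_mod_cast h3
      have hqc1 : (1:ℝ) ≤ ((q:ℕ):ℝ) := by exact_mod_cast h2
      have e1 : ((t-s)^α)^p0 = (t-s)^(α*(p0:ℝ)) := by
        rw [← Real.rpow_natCast ((t-s)^α) p0, ← Real.rpow_mul hΔ.le]
      have e2 : ((t-s)^((k:ℝ)*α))^q = (t-s)^(((k:ℝ)*α)*(q:ℝ)) := by
        rw [← Real.rpow_natCast ((t-s)^((k:ℝ)*α)) q, ← Real.rpow_mul hΔ.le]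
      rw [e1, e2, ← Real.rpow_add hΔ]
      have t1 : ((n:ℕ):ℝ)*α ≤ (k:ℝ)*α := mul_le_mul_of_nonneg_right hncast hα.le
      have t2 : (k:ℝ)*α ≤ (k:ℝ)*α*((q:ℕ):ℝ) :=
        le_mul_of_one_le_right (mul_nonneg hkcast hα.le) hqc1
      have t3 : 0 ≤ α*((p0:ℕ):ℝ) := by positivity
      have u1 : α*((p0:ℕ):ℝ) ≤ (k:ℝ) := by
        have := mul_le_mul_of_nonneg_right hα1 hp0c0
        linarith
      have u2 : (k:ℝ)*α*((q:ℕ):ℝ) ≤ ((q:ℕ):ℝ) := by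
        have := mul_le_mul_of_nonneg_right hkα (le_trans zero_le_one hqc1)
        linarith
      have u4 : 2*(k:ℝ) ≤ ((k:ℝ)+1)^3 := by
        have hcub : ((k:ℝ)+1)^3 = (k:ℝ)*((k:ℝ)*(k:ℝ)) + 3*((k:ℝ)*(k:ℝ)) + 3*(k:ℝ) + 1 := by
          ring
        have h1 : 0 ≤ (k:ℝ)*((k:ℝ)*(k:ℝ)) := mul_nonneg hkcast (mul_nonneg hkcast hkcast)
        have h2 : 0 ≤ (k:ℝ)*(k:ℝ) := mul_nonneg hkcast hkcast
        linarith
      have t4 : 0 ≤ ((n:ℕ):ℝ)*α := mul_nonneg (by linarith) hα.le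
      apply crude (t-s) T _ e' (((k:ℝ)+1)^3) hΔ hΔT
      · rw [he']
        linarith
      · rw [he']
        linarith [u1, u2, hqc, u4, t4]
    have hBell : ∀ j ∈ Finset.Icc (i+1) k,
        |𝕏 (j-i) s t - (X t - X s)^(j-i) / (Nat.factorial (j-i) : ℝ)|
          ≤ ((k:ℝ)+1)^k * (B1 * (B2 * (K1 * (t-s)^e'))) := by
      intro j hj
      rw [Finset.mem_Icc] at hj
      rw [h𝕏]
      have ha0v : (fun m : Fin k =>
          if (m : ℕ) = 0 then X t - X s else G ((m:ℕ)+1) t - G ((m:ℕ)+1) s) ⟨0, hk1⟩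
          = X t - X s := by simp
      have hbb := bell_aux k (j-i) hk1 (by omega) (by omega)
        (fun m : Fin k => if (m : ℕ) = 0 then X t - X s else G ((m:ℕ)+1) t - G ((m:ℕ)+1) s)
        CX' CG' ((t-s)^α) ((t-s)^((k:ℝ)*α)) (K1 * (t-s)^e')
        hCX0 hCG0 hΔαnn (Real.rpow_nonneg hΔ.le _) (mul_nonneg hK1nn hΔe'nn)
        (by rw [if_pos rfl]; exact hXineq)
        (by
          intro m hm
          simp only [hm, if_false]
          exact hG' ((m:ℕ)+1) (by omega) (by omega) s t hs hst htT)
        hDq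
      rw [if_pos rfl] at hbb
      calc |bellP k (j-i) _ - (X t - X s)^(j-i) / (Nat.factorial (j-i) : ℝ)|
          ≤ ((k:ℝ)+1)^k * ((max 1 CX')^k * (max 1 CG')^k * (K1 * (t-s)^e')) := hbb
        _ = ((k:ℝ)+1)^k * (B1 * (B2 * (K1 * (t-s)^e'))) := by rw [hB1, hB2]; ring
    -- bound on the Y coefficients
    have hYle : ∀ j, 1 ≤ j → j ≤ k → |fd (j-1) s (X s)| ≤ M := by
      intro j h1 h2
      exact (hMb (j-1) (by omega) s (X s) hs (by linarith) hXsR).1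
    -- the sum over j of the Bell errors
    have hA3 : |(∑ j ∈ Finset.Icc (i+1) k,
          fd (j-1) s (X s) * ((X t - X s)^(j-i) / (Nat.factorial (j-i) : ℝ)))
        - (∑ j ∈ Finset.Icc (i+1) k, fd (j-1) s (X s) * 𝕏 (j-i) s t)|
        ≤ (k:ℝ) * (M * (((k:ℝ)+1)^k * (B1 * (B2 * (K1 * (t-s)^e'))))) := by
      rw [← Finset.sum_sub_distrib]
      set Bd : ℝ := M * (((k:ℝ)+1)^k * (B1 * (B2 * (K1 * (t-s)^e')))) with hBd
      have hBdnn : 0 ≤ Bd := by positivity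
      have hterm : ∀ j ∈ Finset.Icc (i+1) k,
          |fd (j-1) s (X s) * ((X t - X s)^(j-i) / (Nat.factorial (j-i) : ℝ))
            - fd (j-1) s (X s) * 𝕏 (j-i) s t| ≤ Bd := by
        intro j hj
        have hj' := Finset.mem_Icc.mp hj
        rw [← mul_sub, abs_mul]
        have h1 := hYle j (by omega) hj'.2
        have h2 : |(X t - X s)^(j-i) / (Nat.factorial (j-i) : ℝ) - 𝕏 (j-i) s t|
            ≤ ((k:ℝ)+1)^k * (B1 * (B2 * (K1 * (t-s)^e'))) := by
          rw [abs_sub_comm]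
          exact hBell j hj
        rw [hBd]
        exact mul_le_mul h1 h2 (abs_nonneg _) hM0
      calc |∑ j ∈ Finset.Icc (i+1) k, (fd (j-1) s (X s) * ((X t - X s)^(j-i) /
              (Nat.factorial (j-i) : ℝ)) - fd (j-1) s (X s) * 𝕏 (j-i) s t)|
          ≤ ∑ j ∈ Finset.Icc (i+1) k, |fd (j-1) s (X s) * ((X t - X s)^(j-i) /
              (Nat.factorial (j-i) : ℝ)) - fd (j-1) s (X s) * 𝕏 (j-i) s t| :=
            Finset.abs_sum_le_sum_abs _ _
        _ ≤ ∑ _j ∈ Finset.Icc (i+1) k, Bd := Finset.sum_le_sum hterm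
        _ = ((Finset.Icc (i+1) k).card : ℝ) * Bd := by rw [Finset.sum_const, nsmul_eq_mul]
        _ ≤ (k:ℝ) * Bd := by
            apply mul_le_mul_of_nonneg_right _ hBdnn
            rw [Nat.card_Icc]
            have : k + 1 - (i + 1) ≤ k := by omega
            exact_mod_cast this
    -- rewrite the Taylor polynomial sum
    have hTPeq : ∑ m ∈ Finset.range n, fd (i - 1 + m) s (X s) * (X t - X s) ^ m /
          (Nat.factorial m : ℝ)
        = fd (i-1) s (X s) + ∑ j ∈ Finset.Icc (i+1) k,
            fd (j-1) s (X s) * ((X t - X s)^(j-i) / (Nat.factorial (j-i) : ℝ)) := by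
      rw [Finset.range_eq_Ico, Finset.sum_eq_sum_Ico_succ_bot (by omega : 0 < n)]
      congr 1
      · simp
      · apply Finset.sum_nbij' (i := fun m => i + m) (j := fun j => j - i)
        · intro m hm
          rw [Finset.mem_Ico] at hm
          rw [Finset.mem_Icc]
          omega
        · intro j hj
          rw [Finset.mem_Icc] at hj
          rw [Finset.mem_Ico]
          omega
        · intro m hm; omega
        · intro j hj
          rw [Finset.mem_Icc] at hj
          omega
        · intro m hm
          rw [Finset.mem_Ico] at hm
          have e1 : i + m - 1 = i - 1 + m := by omega
          have e2 : i + m - i = m := by omega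
          rw [e1, e2]
          ring
    -- the algebraic decomposition
    have hYt : Y i t = fd (i-1) t (X t) := hYdef i hi1 hik t
    have hYs : Y i s = fd (i-1) s (X s) := hYdef i hi1 hik s
    have hSXeq : ∑ j ∈ Finset.Icc (i+1) k, Y j s * 𝕏 (j-i) s t
        = ∑ j ∈ Finset.Icc (i+1) k, fd (j-1) s (X s) * 𝕏 (j-i) s t := by
      apply Finset.sum_congr rfl
      intro j hj
      have hj' := Finset.mem_Icc.mp hj
      rw [hYdef j (by omega) hj'.2]
    have hkey : Y i t - Y i s - ∑ j ∈ Finset.Icc (i+1) k, Y j s * 𝕏 (j-i) s t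
        = (fd (i-1) t (X t) - fd (i-1) s (X t))
        + (fd (i - 1 + 0) s (X t) - ∑ m ∈ Finset.range n,
            fd (i - 1 + m) s (X s) * (X t - X s) ^ m / (Nat.factorial m : ℝ))
        + ((∑ j ∈ Finset.Icc (i+1) k,
              fd (j-1) s (X s) * ((X t - X s)^(j-i) / (Nat.factorial (j-i) : ℝ)))
          - (∑ j ∈ Finset.Icc (i+1) k, fd (j-1) s (X s) * 𝕏 (j-i) s t)) := by
      rw [hYt, hYs, hSXeq, hTPeq]
      have e0 : i - 1 + 0 = i - 1 := by omega
      rw [e0]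
      ring
    rw [hkey]
    have habs : |(fd (i-1) t (X t) - fd (i-1) s (X t))
        + (fd (i - 1 + 0) s (X t) - ∑ m ∈ Finset.range n,
            fd (i - 1 + m) s (X s) * (X t - X s) ^ m / (Nat.factorial m : ℝ))
        + ((∑ j ∈ Finset.Icc (i+1) k,
              fd (j-1) s (X s) * ((X t - X s)^(j-i) / (Nat.factorial (j-i) : ℝ)))
          - (∑ j ∈ Finset.Icc (i+1) k, fd (j-1) s (X s) * 𝕏 (j-i) s t))|
        ≤ M * (K1 * (t-s)^e') + M * (B1 * (t-s)^e')
          + (k:ℝ) * (M * (((k:ℝ)+1)^k * (B1 * (B2 * (K1 * (t-s)^e'))))) := by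
      refine le_trans (abs_add_le _ _) ?_
      refine add_le_add (le_trans (abs_add_le _ _) (add_le_add hA1 hA2')) hA3
    refine le_trans habs ?_
    rw [hC]
    apply le_of_eq
    ring
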